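/- Let f : X → Y be a continuous map between Hausdorff, second-countable, locally compact spaces, and let Φ : Y × [0,1] → Z be a proper continuous map into a Hausdorff, second-countable, locally compact space Z. Then L(Φ ∘ (f × id_{[0,1]})) = Φ( L(f) × [0,1] ). -/

import Mathlib

open Filter Topology Set

/-- The limit set `L(f)` of a map `f : X → Y`: the set of `y ∈ Y` for which there is a
sequence in `X` with no cluster points in `X` whose image under `f` converges to `y`. -/
def limitSet {X Y : Type*} [TopologicalSpace X] [TopologicalSpace Y] (f : X → Y) : Set Y :=
  {y | ∃ u : ℕ → X, (∀ p : X, ¬ MapClusterPt p Filter.atTop u) ∧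
    Filter.Tendsto (fun n => f (u n)) Filter.atTop (nhds y)}

private lemma mapClusterPt_prod_of_tendsto {A B : Type*} [TopologicalSpace A]
    [TopologicalSpace B] {u : ℕ → A} {v : ℕ → B} {p : A} {t : B}
    (hu : MapClusterPt p Filter.atTop u) (hv : Filter.Tendsto v Filter.atTop (nhds t)) :
    MapClusterPt (p, t) Filter.atTop (fun n => (u n, v n)) := by
  rw [mapClusterPt_iff_frequently] at hu ⊢
  intro s hs
  rcases mem_nhds_prod_iff.1 hs with ⟨s₁, hs₁, s₂, hs₂, hsub⟩
  exact ((hu s₁ hs₁).and_eventually (hv.eventually_mem hs₂)).mono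
    (fun n hn => hsub ⟨hn.1, hn.2⟩)

/-- If `Φ : Y × [0,1] → Z` is a proper homotopy, then
`L(Φ ∘ (f × id)) = Φ(L(f) × [0,1])`. -/
theorem limitSet_proper_homotopy
    {X Y Z : Type*}
    [TopologicalSpace X] [T2Space X] [SecondCountableTopology X] [LocallyCompactSpace X]
    [TopologicalSpace Y] [T2Space Y] [SecondCountableTopology Y] [LocallyCompactSpace Y]
    [TopologicalSpace Z] [T2Space Z] [SecondCountableTopology Z] [LocallyCompactSpace Z]
    (f : X → Y) (hf : Continuous f)
    (Φ : Y × unitInterval → Z) (hΦ : Continuous Φ)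
    (hproper : ∀ C : Set Z, IsCompact C → IsCompact (Φ ⁻¹' C)) :
    limitSet (fun p : X × unitInterval => Φ (f p.1, p.2)) =
      Φ '' ((limitSet f) ×ˢ (Set.univ : Set unitInterval)) := by
  ext z
  constructor
  · rintro ⟨w, hw, htend⟩
    set g : ℕ → Y × unitInterval := fun n => (f (w n).1, (w n).2) with hg
    obtain ⟨K, hKc, hKn⟩ := exists_compact_mem_nhds z
    have hfreq : ∃ᶠ n in Filter.atTop, g n ∈ Φ ⁻¹' K :=
      (htend.eventually_mem hKn).frequently
    obtain ⟨⟨y, t⟩, -, φ, hφ, hconv⟩ := ((hproper K hKc).tendsto_subseq' hfreq)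
    have hconv1 : Filter.Tendsto (fun n => f ((w (φ n)).1)) Filter.atTop (nhds y) :=
      (continuous_fst.continuousAt.tendsto.comp hconv)
    have hconv2 : Filter.Tendsto (fun n => (w (φ n)).2) Filter.atTop (nhds t) :=
      (continuous_snd.continuousAt.tendsto.comp hconv)
    have hnc : ∀ p : X, ¬ MapClusterPt p Filter.atTop (fun n => (w (φ n)).1) := by
      intro p hp
      have h2 : MapClusterPt (p, t) Filter.atTop (fun n => ((w (φ n)).1, (w (φ n)).2)) :=
        mapClusterPt_prod_of_tendsto hp hconv2
      have h3 : MapClusterPt (p, t) Filter.atTop (w ∘ φ) := by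
        convert h2 using 1
        rfl
      exact hw (p, t) (h3.of_comp hφ.tendsto_atTop)
    have hy : y ∈ limitSet f := ⟨fun n => (w (φ n)).1, hnc, hconv1⟩
    have hzeq : Φ (y, t) = z := by
      have h1 : Filter.Tendsto (fun n => Φ (g (φ n))) Filter.atTop (nhds (Φ (y, t))) :=
        hΦ.continuousAt.tendsto.comp hconv
      have h2 : Filter.Tendsto (fun n => Φ (g (φ n))) Filter.atTop (nhds z) :=
        htend.comp hφ.tendsto_atTop
      exact tendsto_nhds_unique h1 h2
    exact ⟨(y, t), ⟨hy, trivial⟩, hzeq⟩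
  · rintro ⟨⟨y, t⟩, ⟨hy, -⟩, rfl⟩
    obtain ⟨u, hu, htend⟩ := hy
    refine ⟨fun n => (u n, t), ?_, ?_⟩
    · rintro ⟨p, s⟩ hp
      have : MapClusterPt p Filter.atTop (Prod.fst ∘ (fun n => (u n, t))) :=
        hp.continuousAt_comp continuous_fst.continuousAt
      exact hu p this
    · exact hΦ.continuousAt.tendsto.comp (htend.prodMk_nhds tendsto_const_nhds)
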